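/- The set { Y₁ + Y₂^Γ : Y₁, Y₂ ∈ M_m(ℂ) ⊗ M_n(ℂ) positive semidefinite } is a closed convex cone in the real vector space of Hermitian mn × mn matrices. -/

import Mathlib

open Matrix Complex Finset
open scoped ComplexOrder

def ptranspose {m n : ℕ} (ρ : Matrix (Fin m × Fin n) (Fin m × Fin n) ℂ) :
    Matrix (Fin m × Fin n) (Fin m × Fin n) ℂ :=
  fun a b => ρ (a.1, b.2) (b.1, a.2)

section AuxLemmas

variable {m n : ℕ}

lemma ptranspose_add' (A B : Matrix (Fin m × Fin n) (Fin m × Fin n) ℂ) :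
    ptranspose (A + B) = ptranspose A + ptranspose B := rfl

lemma ptranspose_smul' (c : ℝ) (A : Matrix (Fin m × Fin n) (Fin m × Fin n) ℂ) :
    ptranspose (c • A) = c • ptranspose A := rfl

lemma trace_ptranspose' (A : Matrix (Fin m × Fin n) (Fin m × Fin n) ℂ) :
    (ptranspose A).trace = A.trace := by
  simp [Matrix.trace, Matrix.diag, ptranspose]

lemma continuous_ptranspose' :
    Continuous (ptranspose (m := m) (n := n)) :=
  continuous_matrix fun a b => (continuous_id.matrix_elem (a.1, b.2) (b.1, a.2))

lemma ptranspose_isHermitian' {A : Matrix (Fin m × Fin n) (Fin m × Fin n) ℂ}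
    (h : A.IsHermitian) : (ptranspose A).IsHermitian := by
  ext a b
  have := congrFun (congrFun h (a.1, b.2)) (b.1, a.2)
  simpa [ptranspose, conjTranspose_apply] using this

lemma posSemidef_smul_real' {k : Type*} [Fintype k] {A : Matrix k k ℂ}
    (hA : A.PosSemidef) {c : ℝ} (hc : 0 ≤ c) : (c • A).PosSemidef := by
  refine posSemidef_iff_dotProduct_mulVec.mpr ⟨?_, fun x => ?_⟩
  · unfold Matrix.IsHermitian
    rw [conjTranspose_smul, star_trivial, hA.1]
  · rw [smul_mulVec, dotProduct_smul]
    have h0 : (0:ℂ) ≤ (c:ℂ) := by exact_mod_cast hc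
    calc (0:ℂ) = (c:ℂ) * 0 := by ring
    _ ≤ _ := by
        rw [Complex.real_smul]
        exact mul_le_mul_of_nonneg_left (hA.dotProduct_mulVec_nonneg x) h0

lemma isClosed_posSemidef' {k : Type*} [Fintype k] :
    IsClosed {A : Matrix k k ℂ | A.PosSemidef} := by
  have h1 : IsClosed {A : Matrix k k ℂ | A.IsHermitian} :=
    isClosed_eq (continuous_id.matrix_conjTranspose) continuous_id
  have h2 : ∀ x : k → ℂ, IsClosed {A : Matrix k k ℂ | 0 ≤ star x ⬝ᵥ A *ᵥ x} := by
    intro x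
    have hc : Continuous fun A : Matrix k k ℂ => star x ⬝ᵥ A *ᵥ x :=
      continuous_const.dotProduct (continuous_id.matrix_mulVec continuous_const)
    have hs : IsClosed {z : ℂ | 0 ≤ z} := by
      have : {z : ℂ | 0 ≤ z} = Complex.re ⁻¹' Set.Ici 0 ∩ Complex.im ⁻¹' {0} := by
        ext z
        simp [Complex.le_def, eq_comm]
      rw [this]
      exact (isClosed_Ici.preimage Complex.continuous_re).inter
        (isClosed_singleton.preimage Complex.continuous_im)
    exact hs.preimage hc
  have : {A : Matrix k k ℂ | A.PosSemidef} =
      {A | A.IsHermitian} ∩ ⋂ x, {A | 0 ≤ star x ⬝ᵥ A *ᵥ x} := by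
    ext A
    simp [Matrix.posSemidef_iff_dotProduct_mulVec, Set.mem_iInter]
  rw [this]
  exact h1.inter (isClosed_iInter h2)

lemma diag_nonneg' {k : Type*} [Fintype k] [DecidableEq k] {A : Matrix k k ℂ}
    (hA : A.PosSemidef) (i : k) : 0 ≤ A i i := by
  have := hA.dotProduct_mulVec_nonneg (Pi.single i 1)
  simpa [mulVec_single, dotProduct, Pi.single_apply, apply_ite] using this

lemma trace_re_eq' {k : Type*} [Fintype k] (A : Matrix k k ℂ) :
    A.trace.re = ∑ l, (A l l).re := by
  simp [Matrix.trace, Matrix.diag, Complex.re_sum]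

lemma trace_re_nonneg' {k : Type*} [Fintype k] [DecidableEq k] {A : Matrix k k ℂ}
    (hA : A.PosSemidef) : 0 ≤ A.trace.re := by
  rw [trace_re_eq']
  exact Finset.sum_nonneg fun l _ => (Complex.le_def.mp (diag_nonneg' hA l)).1

lemma entry_norm_le_trace' {k : Type*} [Fintype k] [DecidableEq k] {A : Matrix k k ℂ}
    (hA : A.PosSemidef) (i j : k) : ‖A i j‖ ≤ A.trace.re := by
  have hd : ∀ l, 0 ≤ (A l l).re := fun l => (Complex.le_def.mp (diag_nonneg' hA l)).1
  have hdim : ∀ l, (A l l).im = 0 := fun l => ((Complex.le_def.mp (diag_nonneg' hA l)).2).symm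
  have hdle : ∀ l, (A l l).re ≤ A.trace.re := by
    intro l
    rw [trace_re_eq']
    exact Finset.single_le_sum (fun l _ => hd l) (mem_univ l)
  rcases eq_or_ne i j with rfl | hij
  · have h1 : A i i = ((A i i).re : ℂ) := by
      apply Complex.ext <;> simp [hdim i]
    rw [h1, Complex.norm_real, Real.norm_eq_abs, _root_.abs_of_nonneg (hd i)]
    exact hdle i
  · set α := A i j with hα
    rcases eq_or_ne α 0 with h0 | h0
    · rw [h0]
      simpa using (hd i).trans (hdle i)
    set t : ℝ := ‖α‖ with ht
    have ht0 : (0:ℝ) < t := norm_pos_iff.mpr h0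
    set x : k → ℂ := Pi.single i (-α) + Pi.single j (t : ℂ) with hx
    have hsx : star x = Pi.single i (-(star α)) + Pi.single j (t : ℂ) := by
      ext q
      rcases eq_or_ne q i with rfl | hqi <;> rcases eq_or_ne q j with rfl | hqj <;>
        simp_all [hx, Pi.single_apply]
    have hmul : star α * α = (t : ℂ)^2 := by
      rw [show star α = (starRingEnd ℂ) α from rfl, mul_comm, Complex.mul_conj]
      norm_cast
      rw [ht, Complex.normSq_eq_norm_sq]
    have hji : A j i = star α := by
      rw [← hA.1]
      simp [conjTranspose_apply, hα]
    have hQ : star x ⬝ᵥ A *ᵥ x =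
        -(star α) * (A i i * (-α) + A i j * (t:ℂ)) +
          (t:ℂ) * (A j i * (-α) + A j j * (t:ℂ)) := by
      rw [hsx, hx, mulVec_add, mulVec_single, mulVec_single]
      simp [add_dotProduct, single_dotProduct, mul_add]
      ring
    have hQval : star x ⬝ᵥ A *ᵥ x =
        ((t^2 : ℝ) : ℂ) * (A i i + A j j) - ((2*t^3 : ℝ) : ℂ) := by
      rw [hQ, hji, hα]
      push_cast
      linear_combination (A i i - 2*(t:ℂ)) * hmul
    have hpos := hA.dotProduct_mulVec_nonneg x
    rw [hQval] at hpos
    have hre : 0 ≤ t^2 * ((A i i).re + (A j j).re) - 2*t^3 := by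
      have h' := (Complex.le_def.mp hpos).1
      simp only [Complex.sub_re, Complex.mul_re, Complex.add_re, Complex.add_im,
        Complex.ofReal_re, Complex.ofReal_im, Complex.zero_re, hdim] at h'
      linarith [h']
    have hpair : (A i i).re + (A j j).re ≤ A.trace.re := by
      rw [trace_re_eq']
      have hsub := Finset.sum_le_sum_of_subset_of_nonneg
        (Finset.subset_univ ({i, j} : Finset k)) (fun l _ _ => hd l)
      rwa [Finset.sum_pair hij] at hsub
    have h2t : 2*t ≤ (A i i).re + (A j j).re := by
      nlinarith [hre, ht0, mul_pos ht0 ht0]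
    show t ≤ A.trace.re
    linarith

end AuxLemmas

attribute [local instance] Matrix.normedAddCommGroup Matrix.normedSpace

theorem stmt_14 (m n : ℕ) :
    IsClosed {Y : Matrix (Fin m × Fin n) (Fin m × Fin n) ℂ |
        ∃ Y₁ Y₂, Y₁.PosSemidef ∧ Y₂.PosSemidef ∧ Y = Y₁ + ptranspose Y₂} ∧
    Convex ℝ {Y : Matrix (Fin m × Fin n) (Fin m × Fin n) ℂ |
        ∃ Y₁ Y₂, Y₁.PosSemidef ∧ Y₂.PosSemidef ∧ Y = Y₁ + ptranspose Y₂} ∧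
    (∀ (c : ℝ), 0 ≤ c → ∀ Y ∈ {Y : Matrix (Fin m × Fin n) (Fin m × Fin n) ℂ |
        ∃ Y₁ Y₂, Y₁.PosSemidef ∧ Y₂.PosSemidef ∧ Y = Y₁ + ptranspose Y₂},
      c • Y ∈ {Y : Matrix (Fin m × Fin n) (Fin m × Fin n) ℂ |
        ∃ Y₁ Y₂, Y₁.PosSemidef ∧ Y₂.PosSemidef ∧ Y = Y₁ + ptranspose Y₂}) ∧
    (∀ Y ∈ {Y : Matrix (Fin m × Fin n) (Fin m × Fin n) ℂ |
        ∃ Y₁ Y₂, Y₁.PosSemidef ∧ Y₂.PosSemidef ∧ Y = Y₁ + ptranspose Y₂},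
      Y.IsHermitian) := by
  refine ⟨?_, ?_, ?_, ?_⟩
  · -- closedness
    haveI : ProperSpace (Matrix (Fin m × Fin n) (Fin m × Fin n) ℂ) :=
      FiniteDimensional.proper ℂ _
    haveI : FirstCountableTopology (Matrix (Fin m × Fin n) (Fin m × Fin n) ℂ) :=
      inferInstanceAs (FirstCountableTopology ((Fin m × Fin n) → (Fin m × Fin n) → ℂ))
    apply IsSeqClosed.isClosed
    intro Yseq Y hmem hY
    choose A B hA hB hsum using hmem
    -- a uniform bound on the traces
    have htr : Filter.Tendsto (fun k => ((Yseq k).trace).re) Filter.atTop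
        (nhds ((Y.trace).re)) :=
      ((Complex.continuous_re.comp (Continuous.matrix_trace continuous_id)).tendsto Y).comp hY
    obtain ⟨C, hC⟩ := htr.bddAbove_range
    have hCmem : ∀ k, ((Yseq k).trace).re ≤ C := fun k => hC (Set.mem_range_self k)
    have htrsplit : ∀ k, ((Yseq k).trace).re = ((A k).trace).re + ((B k).trace).re := by
      intro k
      rw [hsum k, trace_add, trace_ptranspose', Complex.add_re]
    have hAtr : ∀ k, ((A k).trace).re ≤ C := fun k => by
      have := htrsplit k ▸ hCmem k
      have hB0 := trace_re_nonneg' (hB k)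
      linarith
    have hBtr : ∀ k, ((B k).trace).re ≤ C := fun k => by
      have := htrsplit k ▸ hCmem k
      have hA0 := trace_re_nonneg' (hA k)
      linarith
    have hC0 : 0 ≤ C := le_trans (by
      have := trace_re_nonneg' (hA 0)
      have := trace_re_nonneg' (hB 0)
      have := htrsplit 0
      linarith) (hCmem 0)
    have hAball : ∀ k, A k ∈ Metric.closedBall (0 : Matrix (Fin m × Fin n) (Fin m × Fin n) ℂ) C := by
      intro k
      rw [mem_closedBall_zero_iff, Matrix.norm_le_iff hC0]
      intro i j
      exact le_trans (entry_norm_le_trace' (hA k) i j) (hAtr k)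
    have hBball : ∀ k, B k ∈ Metric.closedBall (0 : Matrix (Fin m × Fin n) (Fin m × Fin n) ℂ) C := by
      intro k
      rw [mem_closedBall_zero_iff, Matrix.norm_le_iff hC0]
      intro i j
      exact le_trans (entry_norm_le_trace' (hB k) i j) (hBtr k)
    have hcomp : IsCompact ((Metric.closedBall (0 : Matrix (Fin m × Fin n) (Fin m × Fin n) ℂ) C) ×ˢ
        (Metric.closedBall (0 : Matrix (Fin m × Fin n) (Fin m × Fin n) ℂ) C)) :=
      (isCompact_closedBall _ _).prod (isCompact_closedBall _ _)
    obtain ⟨⟨Alim, Blim⟩, _, φ, hφ, hconv⟩ :=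
      hcomp.tendsto_subseq (x := fun k => (A k, B k)) fun k => ⟨hAball k, hBball k⟩
    have hconvA : Filter.Tendsto (fun k => A (φ k)) Filter.atTop (nhds Alim) :=
      (continuous_fst.tendsto _).comp hconv
    have hconvB : Filter.Tendsto (fun k => B (φ k)) Filter.atTop (nhds Blim) :=
      (continuous_snd.tendsto _).comp hconv
    have hApsd : Alim.PosSemidef :=
      isClosed_posSemidef'.mem_of_tendsto hconvA
        (Filter.Eventually.of_forall fun k => hA (φ k))
    have hBpsd : Blim.PosSemidef :=
      isClosed_posSemidef'.mem_of_tendsto hconvB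
        (Filter.Eventually.of_forall fun k => hB (φ k))
    have hY1 : Filter.Tendsto (fun k => Yseq (φ k)) Filter.atTop (nhds Y) :=
      hY.comp hφ.tendsto_atTop
    have hY2 : Filter.Tendsto (fun k => Yseq (φ k)) Filter.atTop
        (nhds (Alim + ptranspose Blim)) := by
      simp only [hsum]
      exact hconvA.add ((continuous_ptranspose'.tendsto _).comp hconvB)
    exact ⟨Alim, Blim, hApsd, hBpsd, tendsto_nhds_unique hY1 hY2⟩
  · -- convexity
    rintro Y ⟨Y₁, Y₂, hY₁, hY₂, rfl⟩ Z ⟨Z₁, Z₂, hZ₁, hZ₂, rfl⟩ a b ha hb hab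
    refine ⟨a • Y₁ + b • Z₁, a • Y₂ + b • Z₂,
      (posSemidef_smul_real' hY₁ ha).add (posSemidef_smul_real' hZ₁ hb),
      (posSemidef_smul_real' hY₂ ha).add (posSemidef_smul_real' hZ₂ hb), ?_⟩
    rw [ptranspose_add', ptranspose_smul', ptranspose_smul', smul_add, smul_add]
    abel
  · -- cone
    rintro c hc Y ⟨Y₁, Y₂, hY₁, hY₂, rfl⟩
    exact ⟨c • Y₁, c • Y₂, posSemidef_smul_real' hY₁ hc, posSemidef_smul_real' hY₂ hc,
      by rw [ptranspose_smul', smul_add]⟩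
  · -- Hermitian
    rintro Y ⟨Y₁, Y₂, hY₁, hY₂, rfl⟩
    exact hY₁.1.add (ptranspose_isHermitian' hY₂.1)
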